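/- (Nuclear norm of a Hadamard product of low-rank factorizations) Let L_A ∈ ℝ^{n₁×r₁}, R_A ∈ ℝ^{n₂×r₁}, L_B ∈ ℝ^{n₁×r₂}, R_B ∈ ℝ^{n₂×r₂}. Then the nuclear norm of the Hadamard (entrywise) product satisfies ‖(L_A R_Aᴴ) ∘ (L_B R_Bᴴ)‖_* ≤ √(Σ_i ‖L_A(i,:)‖₂²·‖L_B(i,:)‖₂²) · √(Σ_j ‖R_A(j,:)‖₂²·‖R_B(j,:)‖₂²). -/

import Mathlib

open Matrix BigOperators


/-- Nuclear norm: sum of singular values, i.e. ∑ √(λᵢ(MᵀM)). -/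
noncomputable def nuclearNorm {m n : Type*} [Fintype m] [Fintype n] [DecidableEq n]
    (M : Matrix m n ℝ) : ℝ :=
  ∑ i, Real.sqrt ((Matrix.isHermitian_conjTranspose_mul_self M).eigenvalues i)

lemma euc_inner_dot {ι : Type*} [Fintype ι] (x y : EuclideanSpace ℝ ι) :
    (inner ℝ x y : ℝ) = (x : ι → ℝ) ⬝ᵥ (y : ι → ℝ) := by
  simp [PiLp.inner_apply, RCLike.inner_apply, dotProduct, mul_comm]

lemma euc_norm_sq {ι : Type*} [Fintype ι] (x : EuclideanSpace ℝ ι) :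
    ‖x‖ ^ 2 = ∑ i, x i ^ 2 := by
  rw [EuclideanSpace.norm_eq, Real.sq_sqrt (by positivity)]
  simp [sq_abs]

lemma dot_MtM {m n : Type*} [Fintype m] [Fintype n] (M : Matrix m n ℝ) (x y : n → ℝ) :
    (M *ᵥ x) ⬝ᵥ (M *ᵥ y) = x ⬝ᵥ ((Mᴴ * M) *ᵥ y) := by
  rw [Matrix.conjTranspose_eq_transpose_of_trivial, Matrix.dotProduct_mulVec,
    Matrix.dotProduct_mulVec, Matrix.vecMul_mulVec]

lemma sum_vecMulVec_mulVec {m n ι : Type*} [Fintype m] [Fintype n] [Fintype ι]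
    (u : ι → m → ℝ) (v : ι → n → ℝ) (x : n → ℝ) :
    (∑ t, Matrix.vecMulVec (u t) (v t)) *ᵥ x = fun a => ∑ t, (v t ⬝ᵥ x) * u t a := by
  funext a
  simp only [Matrix.mulVec, dotProduct, Finset.sum_apply, Matrix.sum_apply,
    Matrix.vecMulVec_apply, Finset.sum_mul]
  rw [Finset.sum_comm]
  refine Finset.sum_congr rfl fun t _ => ?_
  refine Finset.sum_congr rfl fun b _ => by ring

/-- Bessel's inequality, in dot-product form. -/
lemma bessel_dot {ι κ : Type*} [Fintype ι] {z : κ → EuclideanSpace ℝ ι}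
    (hz : Orthonormal ℝ z) (x : ι → ℝ) (s : Finset κ) :
    ∑ k ∈ s, ((z k : ι → ℝ) ⬝ᵥ x) ^ 2 ≤ ∑ i, x i ^ 2 := by
  have hb := hz.sum_inner_products_le (x := (WithLp.equiv 2 (ι → ℝ)).symm x) (s := s)
  rw [euc_norm_sq] at hb
  calc ∑ k ∈ s, ((z k : ι → ℝ) ⬝ᵥ x) ^ 2
      = ∑ k ∈ s, ‖(inner ℝ (z k) ((WithLp.equiv 2 (ι → ℝ)).symm x) : ℝ)‖ ^ 2 := by
        refine Finset.sum_congr rfl fun k _ => ?_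
        rw [euc_inner_dot, Real.norm_eq_abs, sq_abs]
        rfl
    _ ≤ ∑ i, ((WithLp.equiv 2 (ι → ℝ)).symm x) i ^ 2 := hb
    _ = ∑ i, x i ^ 2 := rfl

theorem nuclearNorm_sum_vecMulVec_le {m n ι : Type*} [Fintype m] [Fintype n] [Fintype ι]
    [DecidableEq n] (u : ι → m → ℝ) (v : ι → n → ℝ) :
    nuclearNorm (∑ t, Matrix.vecMulVec (u t) (v t)) ≤
      ∑ t, Real.sqrt (∑ a, u t a ^ 2) * Real.sqrt (∑ b, v t b ^ 2) := by
  classical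
  set M : Matrix m n ℝ := ∑ t, Matrix.vecMulVec (u t) (v t) with hMdef
  set ev : n → ℝ := (Matrix.isHermitian_conjTranspose_mul_self M).eigenvalues with hevdef
  have hev0 : ∀ k, 0 ≤ ev k := fun k => Matrix.eigenvalues_conjTranspose_mul_self_nonneg M k
  set z : OrthonormalBasis n ℝ (EuclideanSpace ℝ n) :=
    (Matrix.isHermitian_conjTranspose_mul_self M).eigenvectorBasis with hzdef
  have hzA : ∀ k, (Mᴴ * M) *ᵥ (z k : n → ℝ) = ev k • (z k : n → ℝ) := fun k =>
    (Matrix.isHermitian_conjTranspose_mul_self M).mulVec_eigenvectorBasis k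
  have hzorth : Orthonormal ℝ (fun k => z k) := z.orthonormal
  have hz : ∀ k l, ((z k : n → ℝ) ⬝ᵥ (z l : n → ℝ)) = if k = l then 1 else 0 := by
    intro k l
    rw [← euc_inner_dot]
    exact orthonormal_iff_ite.mp hzorth k l
  have hdot' : ∀ k l, (M *ᵥ (z k : n → ℝ)) ⬝ᵥ (M *ᵥ (z l : n → ℝ)) = if k = l then ev l else 0 := by
    intro k l
    rw [dot_MtM, hzA, dotProduct_smul, smul_eq_mul, hz]
    split <;> simp
  set c : ι → n → ℝ := fun t k => v t ⬝ᵥ (z k : n → ℝ) with hcdef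
  set d : ι → n → ℝ := fun t k => (Real.sqrt (ev k))⁻¹ * (u t ⬝ᵥ (M *ᵥ (z k : n → ℝ))) with hddef
  have hc : ∀ t k, c t k = v t ⬝ᵥ (z k : n → ℝ) := fun t k => rfl
  have hd : ∀ t k, d t k = (Real.sqrt (ev k))⁻¹ * (u t ⬝ᵥ (M *ᵥ (z k : n → ℝ))) := fun t k => rfl
  have hMz : ∀ k, M *ᵥ (z k : n → ℝ) = fun a => ∑ t, c t k * u t a := by
    intro k; rw [hMdef]; exact sum_vecMulVec_mulVec u v _
  have hkey : ∀ k, ev k ≠ 0 → Real.sqrt (ev k) = ∑ t, d t k * c t k := by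
    intro k hk
    have h1 : (M *ᵥ (z k : n → ℝ)) ⬝ᵥ (M *ᵥ (z k : n → ℝ)) = ev k := by rw [hdot', if_pos rfl]
    have h2 : ∀ w : m → ℝ, (fun a => ∑ t, c t k * u t a) ⬝ᵥ w = ∑ t, c t k * (u t ⬝ᵥ w) := by
      intro w
      simp only [dotProduct, Finset.sum_mul]
      rw [Finset.sum_comm]
      refine Finset.sum_congr rfl fun t _ => ?_
      rw [Finset.mul_sum]
      exact Finset.sum_congr rfl fun a _ => by ring
    have h3 : ∑ t, c t k * (u t ⬝ᵥ (M *ᵥ (z k : n → ℝ))) = ev k := by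
      rw [← h2, ← hMz k, h1]
    have hsq : Real.sqrt (ev k) * Real.sqrt (ev k) = ev k := Real.mul_self_sqrt (hev0 k)
    have hsne : Real.sqrt (ev k) ≠ 0 := by
      rw [Real.sqrt_ne_zero']
      exact lt_of_le_of_ne (hev0 k) (Ne.symm hk)
    have h5 : ∑ t, d t k * c t k =
        (Real.sqrt (ev k))⁻¹ * ∑ t, c t k * (u t ⬝ᵥ (M *ᵥ (z k : n → ℝ))) := by
      rw [Finset.mul_sum]
      exact Finset.sum_congr rfl fun t _ => by rw [hd]; ring
    rw [h5, h3, inv_mul_eq_div, eq_div_iff hsne]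
    exact hsq
  set S : Finset n := Finset.univ.filter (fun k => ev k ≠ 0) with hS
  have hcB : ∀ t, ∑ k ∈ S, c t k ^ 2 ≤ ∑ b, v t b ^ 2 := by
    intro t
    have h1 : ∑ k ∈ S, c t k ^ 2 = ∑ k ∈ S, ((z k : n → ℝ) ⬝ᵥ v t) ^ 2 :=
      Finset.sum_congr rfl fun k _ => by rw [hc, dotProduct_comm]
    rw [h1]
    exact bessel_dot hzorth (v t) S
  set W : {k : n // ev k ≠ 0} → EuclideanSpace ℝ m :=
    fun k => ((Real.sqrt (ev k.1))⁻¹ • WithLp.toLp 2 (M *ᵥ (z k.1 : n → ℝ)) : EuclideanSpace ℝ m) with hWdef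
  have hW : ∀ k : {k : n // ev k ≠ 0},
      W k = ((Real.sqrt (ev k.1))⁻¹ • WithLp.toLp 2 (M *ᵥ (z k.1 : n → ℝ)) : EuclideanSpace ℝ m) :=
    fun k => rfl
  have hWval : ∀ (k : {k : n // ev k ≠ 0}) (a : m),
      (W k : m → ℝ) a = (Real.sqrt (ev k.1))⁻¹ * (M *ᵥ (z k.1 : n → ℝ)) a := fun k a => rfl
  have hWinner : ∀ k l : {k : n // ev k ≠ 0}, (inner ℝ (W k) (W l) : ℝ) =
      (Real.sqrt (ev k.1))⁻¹ * ((Real.sqrt (ev l.1))⁻¹ *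
        ((M *ᵥ (z k.1 : n → ℝ)) ⬝ᵥ (M *ᵥ (z l.1 : n → ℝ)))) := by
    intro k l
    rw [hW k, hW l, real_inner_smul_left, real_inner_smul_right, euc_inner_dot]
  have hWorth : Orthonormal ℝ W := by
    rw [orthonormal_iff_ite]
    intro k l
    rw [hWinner, hdot']
    by_cases hkl : k = l
    · subst hkl
      have hsne : Real.sqrt (ev k.1) ≠ 0 := by
        rw [Real.sqrt_ne_zero']
        exact lt_of_le_of_ne (hev0 k.1) (Ne.symm k.2)
      rw [if_pos rfl, if_pos rfl, ← Real.mul_self_sqrt (hev0 k.1)]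
      field_simp
      rw [Real.sqrt_sq (Real.sqrt_nonneg _)]
    · have hkl' : k.1 ≠ l.1 := fun h => hkl (Subtype.ext h)
      rw [if_neg hkl', if_neg hkl]
      ring
  have hdB : ∀ t, ∑ k ∈ S, d t k ^ 2 ≤ ∑ a, u t a ^ 2 := by
    intro t
    have h1 : ∑ k ∈ S, d t k ^ 2 = ∑ k : {k : n // ev k ≠ 0}, d t k.1 ^ 2 := by
      rw [hS]
      exact Finset.sum_subtype _ (by simp) _
    have h2 : ∀ k : {k : n // ev k ≠ 0}, d t k.1 = (W k : m → ℝ) ⬝ᵥ u t := by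
      intro k
      rw [hd]
      simp only [dotProduct, hWval, mul_assoc, ← Finset.mul_sum]
      congr 1
      exact Finset.sum_congr rfl fun a _ => mul_comm _ _
    rw [h1]
    calc ∑ k : {k : n // ev k ≠ 0}, d t k.1 ^ 2
        = ∑ k : {k : n // ev k ≠ 0}, ((W k : m → ℝ) ⬝ᵥ u t) ^ 2 :=
          Finset.sum_congr rfl fun k _ => by rw [h2]
      _ ≤ ∑ a, u t a ^ 2 := bessel_dot hWorth (u t) Finset.univ
  have hnn : nuclearNorm M = ∑ k, Real.sqrt (ev k) := rfl
  have hfilter : ∑ k, Real.sqrt (ev k) = ∑ k ∈ S, Real.sqrt (ev k) := by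
    symm
    apply Finset.sum_subset (Finset.filter_subset _ _)
    intro k _ hk
    simp only [hS, Finset.mem_filter, Finset.mem_univ, true_and, not_not] at hk
    rw [hk, Real.sqrt_zero]
  calc nuclearNorm M = ∑ k ∈ S, Real.sqrt (ev k) := by rw [hnn, hfilter]
    _ = ∑ k ∈ S, ∑ t, d t k * c t k := by
        refine Finset.sum_congr rfl fun k hk => hkey k ?_
        simpa [hS] using hk
    _ = ∑ t, ∑ k ∈ S, d t k * c t k := Finset.sum_comm
    _ ≤ ∑ t, Real.sqrt (∑ k ∈ S, d t k ^ 2) * Real.sqrt (∑ k ∈ S, c t k ^ 2) :=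
        Finset.sum_le_sum fun t _ => Real.sum_mul_le_sqrt_mul_sqrt S (d t) (c t)
    _ ≤ ∑ t, Real.sqrt (∑ a, u t a ^ 2) * Real.sqrt (∑ b, v t b ^ 2) :=
        Finset.sum_le_sum fun t _ => mul_le_mul (Real.sqrt_le_sqrt (hdB t))
          (Real.sqrt_le_sqrt (hcB t)) (Real.sqrt_nonneg _) (Real.sqrt_nonneg _)

theorem stmt_12 {n₁ n₂ r₁ r₂ : Type*} [Fintype n₁] [Fintype n₂] [Fintype r₁] [Fintype r₂]
    [DecidableEq n₂]
    (LA : Matrix n₁ r₁ ℝ) (RA : Matrix n₂ r₁ ℝ) (LB : Matrix n₁ r₂ ℝ) (RB : Matrix n₂ r₂ ℝ) :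
    nuclearNorm (Matrix.hadamard (LA * RAᵀ) (LB * RBᵀ)) ≤
      Real.sqrt (∑ i, (∑ j, LA i j ^ 2) * (∑ j, LB i j ^ 2)) *
      Real.sqrt (∑ i, (∑ j, RA i j ^ 2) * (∑ j, RB i j ^ 2)) := by
  classical
  have hM : Matrix.hadamard (LA * RAᵀ) (LB * RBᵀ) =
      ∑ t : r₁ × r₂, Matrix.vecMulVec (fun i => LA i t.1 * LB i t.2)
        (fun i' => RA i' t.1 * RB i' t.2) := by
    ext i i'
    simp only [Matrix.hadamard_apply, Matrix.mul_apply, Matrix.transpose_apply,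
      Matrix.sum_apply, Matrix.vecMulVec_apply, Fintype.sum_prod_type]
    rw [Finset.sum_mul_sum]
    exact Finset.sum_congr rfl fun j _ => Finset.sum_congr rfl fun j' _ => by ring
  rw [hM]
  refine le_trans (nuclearNorm_sum_vecMulVec_le _ _) ?_
  refine le_trans (Real.sum_sqrt_mul_sqrt_le Finset.univ
    (f := fun t : r₁ × r₂ => ∑ i, (LA i t.1 * LB i t.2) ^ 2)
    (g := fun t : r₁ × r₂ => ∑ i', (RA i' t.1 * RB i' t.2) ^ 2)
    (fun t => by positivity) (fun t => by positivity)) (le_of_eq ?_)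
  congr 1
  · congr 1
    rw [Finset.sum_comm]
    refine Finset.sum_congr rfl fun i _ => ?_
    rw [Finset.sum_mul_sum, Fintype.sum_prod_type]
    exact Finset.sum_congr rfl fun j _ => Finset.sum_congr rfl fun j' _ => by ring
  · congr 1
    rw [Finset.sum_comm]
    refine Finset.sum_congr rfl fun i _ => ?_
    rw [Finset.sum_mul_sum, Fintype.sum_prod_type]
    exact Finset.sum_congr rfl fun j _ => Finset.sum_congr rfl fun j' _ => by ring
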